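/- For nonnegative vectors x, y in R^n (each with at least one positive entry), the probability that argmin_j (-log U_j)/x_j equals argmin_j (-log U_j)/y_j, where U_1,...,U_n are i.i.d. uniform on (0,1], equals J_P(x,y) = sum over indices i with x_i>0 and y_i>0 of 1 / (sum_j max(x_j/x_i, y_j/y_i)). -/

import Mathlib

open MeasureTheory ProbabilityTheory Finset

lemma rpow_lt_iff_aux {s t m : ℝ} (hs : 0 < s) (ht : 0 < t) :
    t < s ^ m ↔ m * (-Real.log s) < -Real.log t := by
  rw [Real.rpow_def_of_pos hs, ← Real.log_lt_iff_lt_exp ht]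
  constructor <;> intro h <;> linarith

lemma ennreal_div_lt_iff {ei ej xi xj : ℝ} (hei : 0 < ei) (hej : 0 < ej)
    (hxi : 0 < xi) (hxj : 0 ≤ xj) :
    ENNReal.ofReal ei / ENNReal.ofReal xi < ENNReal.ofReal ej / ENNReal.ofReal xj
      ↔ (xj / xi) * ei < ej := by
  rcases eq_or_lt_of_le hxj with h0 | hxj'
  · refine iff_of_true ?_ ?_
    · rw [← h0, ENNReal.ofReal_zero, ENNReal.div_zero (ENNReal.ofReal_pos.mpr hej).ne']
      exact ENNReal.div_lt_top ENNReal.ofReal_ne_top (ENNReal.ofReal_pos.mpr hxi).ne'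
    · rw [← h0]; simpa using hej
  · rw [← ENNReal.ofReal_div_of_pos hxi, ← ENNReal.ofReal_div_of_pos hxj',
      ENNReal.ofReal_lt_ofReal_iff (by positivity),
      div_lt_div_iff₀ hxi hxj', div_mul_eq_mul_div, div_lt_iff₀ hxi]
    constructor <;> intro h <;> linarith

lemma pi_measure_slice {n : ℕ} (i : Fin n) (m : Fin n → ℝ) (hm : ∀ j, 0 ≤ m j)
    (hmi : m i = 1) :
    Measure.pi (fun _ : Fin n => volume.restrict (Set.Ioc (0:ℝ) 1))
      {u | ∀ j, j ≠ i → u j < (u i) ^ (m j)} = ENNReal.ofReal (∑ j, m j)⁻¹ := by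
  classical
  set ν0 : Measure ℝ := volume.restrict (Set.Ioc (0:ℝ) 1) with hν0
  haveI : IsProbabilityMeasure ν0 := ⟨by simp [hν0, Real.volume_Ioc]⟩
  set p : Fin n → Prop := fun j => j = i with hp
  haveI : Unique {j // p j} := ⟨⟨⟨i, rfl⟩⟩, by rintro ⟨j, hj⟩; exact Subtype.ext hj⟩
  set S : Set (({j // p j} → ℝ) × ({j // ¬ p j} → ℝ)) :=
    {q | ∀ j : {j // ¬ p j}, q.2 j < (q.1 ⟨i, rfl⟩) ^ m j.1} with hSdef
  have hS : MeasurableSet S := by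
    rw [hSdef, Set.setOf_forall]
    refine MeasurableSet.iInter fun j => measurableSet_lt
      (measurable_snd.eval) ?_
    exact (Real.continuous_rpow_const (hm j.1)).measurable.comp measurable_fst.eval
  have hmp := measurePreserving_piEquivPiSubtypeProd (fun _ : Fin n => ν0) p
  set e := MeasurableEquiv.piEquivPiSubtypeProd (fun _ : Fin n => ℝ) p with he
  have hpre : e ⁻¹' S = {u | ∀ j, j ≠ i → u j < (u i) ^ (m j)} := by
    ext u
    simp only [hSdef, Set.mem_preimage, Set.mem_setOf_eq, he,
      MeasurableEquiv.piEquivPiSubtypeProd, MeasurableEquiv.coe_mk,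
      Equiv.piEquivPiSubtypeProd_apply, Subtype.forall]
    exact Iff.rfl
  rw [← hpre, ← Measure.map_apply (MeasurableEquiv.measurable e) hS, hmp.map_eq,
    Measure.prod_apply hS]
  have hslice : ∀ a : {j // p j} → ℝ,
      (Prod.mk a ⁻¹' S) = Set.pi Set.univ (fun j : {j // ¬ p j} => Set.Iio ((a ⟨i, rfl⟩) ^ m j.1)) := by
    intro a; ext b; simp [hSdef, Set.mem_pi]
  have hinner : ∀ a : {j // p j} → ℝ,
      (Measure.pi fun _ : {j // ¬ p j} => ν0) (Prod.mk a ⁻¹' S)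
        = ∏ j : {j // ¬ p j}, ν0 (Set.Iio ((a ⟨i, rfl⟩) ^ m j.1)) := by
    intro a; rw [hslice a, Measure.pi_pi]
  set g : ℝ → ENNReal := fun t => ∏ j : {j // ¬ p j}, ν0 (Set.Iio (t ^ m j.1)) with hg
  have hgmeas : Measurable g := by
    refine Finset.measurable_prod _ fun j _ => ?_
    have h1 : Monotone fun c : ℝ => ν0 (Set.Iio c) :=
      fun a b hab => measure_mono (Set.Iio_subset_Iio hab)
    exact h1.measurable.comp (Real.continuous_rpow_const (hm j.1)).measurable
  have hfu := measurePreserving_funUnique ν0 {j // p j}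
  set s' : ℝ := ∑ j : {j // ¬ p j}, m j.1 with hs'
  have hs'0 : 0 ≤ s' := Finset.sum_nonneg fun j _ => hm j.1
  have hsum : ∑ j, m j = s' + 1 := by
    have h1 : ∑ j ∈ Finset.univ.erase i, m j = s' := by
      rw [hs', ← Finset.sum_subtype (Finset.univ.erase i)
        (fun j => by simp [hp, Finset.mem_erase]) m]
    rw [← Finset.add_sum_erase Finset.univ m (Finset.mem_univ i), hmi, h1, add_comm]
  have hgroupeq : ∀ t ∈ Set.Ioc (0:ℝ) 1, g t = ENNReal.ofReal (t ^ s') := by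
    intro t ht
    have h1 : ∀ j : {j // ¬ p j}, ν0 (Set.Iio (t ^ m j.1)) = ENNReal.ofReal (t ^ m j.1) := by
      intro j
      have hc1 : t ^ m j.1 ≤ 1 := Real.rpow_le_one ht.1.le ht.2 (hm j.1)
      have h2 : Set.Iio (t ^ m j.1) ∩ Set.Ioc (0:ℝ) 1 = Set.Ioo 0 (t ^ m j.1) := by
        ext z
        simp only [Set.mem_inter_iff, Set.mem_Iio, Set.mem_Ioc, Set.mem_Ioo]
        exact ⟨fun h => ⟨h.2.1, h.1⟩, fun h => ⟨h.2, h.1, h.2.le.trans hc1⟩⟩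
      rw [hν0, Measure.restrict_apply measurableSet_Iio, h2, Real.volume_Ioo, sub_zero]
    rw [hg]
    simp only [h1]
    rw [← ENNReal.ofReal_prod_of_nonneg fun j _ => Real.rpow_nonneg ht.1.le _,
      ← Real.rpow_sum_of_pos ht.1]
  have hfinal : (∫⁻ t, g t ∂ν0) = ENNReal.ofReal (∑ j, m j)⁻¹ := by
    have hν0eq : (∫⁻ t, g t ∂ν0) = ∫⁻ t in Set.Ioc (0:ℝ) 1, ENNReal.ofReal (t ^ s') ∂volume := by
      rw [hν0]
      exact setLIntegral_congr_fun measurableSet_Ioc (fun t ht => hgroupeq t ht)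
    rw [hν0eq]
    have hInt : IntegrableOn (fun t : ℝ => t ^ s') (Set.Ioc 0 1) volume :=
      (intervalIntegral.intervalIntegrable_rpow' (by linarith)).1
    rw [← ofReal_integral_eq_lintegral_ofReal hInt
      ((ae_restrict_iff' measurableSet_Ioc).2
        (Filter.Eventually.of_forall fun t ht => Real.rpow_nonneg ht.1.le _))]
    congr 1
    rw [← intervalIntegral.integral_of_le zero_le_one, integral_rpow (Or.inl (by linarith)),
      hsum, Real.one_rpow, Real.zero_rpow (by linarith)]
    norm_num
  refine Eq.trans (lintegral_congr fun a => hinner a) ?_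
  refine Eq.trans ?_ hfinal
  convert hfu.lintegral_comp hgmeas using 2 <;> congr! <;>
    (simp only [MeasurableEquiv.funUnique, Equiv.funUnique, Equiv.piUnique,
      MeasurableEquiv.coe_mk, Equiv.coe_fn_mk];
     exact congrArg _ (Subsingleton.elim _ _))

open Classical in
/-- The probability Jaccard similarity of two nonnegative vectors. -/
noncomputable def JP {ι : Type*} [Fintype ι] (x y : ι → ℝ) : ℝ :=
  ∑ i ∈ Finset.univ.filter (fun i => 0 < x i ∧ 0 < y i),
    (∑ j, max (x j / x i) (y j / y i))⁻¹

/-- For i.i.d. uniform `U_j` on `(0,1]`, the probability that the strict argmin of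
`(-log U_j)/x_j` coincides with the strict argmin of `(-log U_j)/y_j` (convention
`1/0 = ∞`) equals `J_P(x, y)`. -/
theorem prob_collision_eq_JP {n : ℕ} (x y : Fin n → ℝ)
    (hx : ∀ j, 0 ≤ x j) (hy : ∀ j, 0 ≤ y j)
    (hxpos : ∃ j, 0 < x j) (hypos : ∃ j, 0 < y j)
    {Ω : Type*} [MeasurableSpace Ω] (μ : Measure Ω) [IsProbabilityMeasure μ]
    (U : Fin n → Ω → ℝ) (hmeas : ∀ j, Measurable (U j))
    (hindep : iIndepFun U μ)
    (hunif : ∀ j, μ.map (U j) = volume.restrict (Set.Ioc (0 : ℝ) 1)) :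
    (μ {ω | ∃ i : Fin n,
        (∀ j, j ≠ i →
          ENNReal.ofReal (-Real.log (U i ω)) / ENNReal.ofReal (x i)
            < ENNReal.ofReal (-Real.log (U j ω)) / ENNReal.ofReal (x j)) ∧
        (∀ j, j ≠ i →
          ENNReal.ofReal (-Real.log (U i ω)) / ENNReal.ofReal (y i)
            < ENNReal.ofReal (-Real.log (U j ω)) / ENNReal.ofReal (y j))}).toReal
      = JP x y := by
  classical
  have hfmeas : Measurable fun ω (j : Fin n) => U j ω := measurable_pi_lambda _ hmeas
  set ν0 : Measure ℝ := volume.restrict (Set.Ioc (0:ℝ) 1) with hν0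
  haveI : IsProbabilityMeasure ν0 := ⟨by simp [hν0, Real.volume_Ioc]⟩
  set ν : Measure (Fin n → ℝ) := Measure.pi (fun _ : Fin n => ν0) with hν
  haveI : IsProbabilityMeasure ν := by rw [hν]; infer_instance
  set mm : Fin n → Fin n → ℝ := fun i j => max (x j / x i) (y j / y i) with hmm
  have hmmnn : ∀ i j, 0 ≤ mm i j := fun i j =>
    le_trans (div_nonneg (hx j) (hx i)) (le_max_left _ _)
  set valid : Finset (Fin n) := Finset.univ.filter (fun i => 0 < x i ∧ 0 < y i) with hvalid
  set Atil : Set (Fin n → ℝ) := {u | ∃ i : Fin n,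
      (∀ j, j ≠ i → ENNReal.ofReal (-Real.log (u i)) / ENNReal.ofReal (x i)
          < ENNReal.ofReal (-Real.log (u j)) / ENNReal.ofReal (x j)) ∧
      (∀ j, j ≠ i → ENNReal.ofReal (-Real.log (u i)) / ENNReal.ofReal (y i)
          < ENNReal.ofReal (-Real.log (u j)) / ENNReal.ofReal (y j))} with hAtil
  set B : Fin n → Set (Fin n → ℝ) := fun i => {u | ∀ j, j ≠ i → u j < (u i) ^ (mm i j)} with hB
  set Good : Set (Fin n → ℝ) := Set.pi Set.univ (fun _ => Set.Ioo (0:ℝ) 1) with hGood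
  have hAmeas : MeasurableSet Atil := by
    have hE : ∀ k : Fin n, Measurable fun u : Fin n → ℝ =>
        ENNReal.ofReal (-Real.log (u k)) := fun k =>
      ENNReal.measurable_ofReal.comp (Real.measurable_log.comp (measurable_pi_apply k)).neg
    rw [hAtil, Set.setOf_exists]
    refine MeasurableSet.iUnion fun i => ?_
    rw [Set.setOf_and]
    refine MeasurableSet.inter ?_ ?_ <;>
    · simp only [Set.setOf_forall]
      refine MeasurableSet.iInter fun j => MeasurableSet.iInter fun hj =>
        measurableSet_lt ((hE i).div measurable_const) ((hE j).div measurable_const)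
  have hGoodmeas : MeasurableSet Good := MeasurableSet.univ_pi fun _ => measurableSet_Ioo
  have hGoodc : ν Goodᶜ = 0 := by
    have h1 : ν Good = 1 := by
      rw [hGood, hν, Measure.pi_pi]
      have h2 : ν0 (Set.Ioo 0 1) = 1 := by
        rw [hν0, Measure.restrict_apply measurableSet_Ioo,
          Set.inter_eq_left.mpr Set.Ioo_subset_Ioc_self, Real.volume_Ioo]
        norm_num
      simp [h2]
    rw [measure_compl hGoodmeas (measure_ne_top _ _), h1, measure_univ, tsub_self]
  have hlaw : μ.map (fun ω (j : Fin n) => U j ω) = ν := by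
    rw [hν]
    refine (Measure.pi_eq fun s hs => ?_).symm
    rw [Measure.map_apply hfmeas (MeasurableSet.univ_pi hs)]
    have hpre : (fun ω (j : Fin n) => U j ω) ⁻¹' Set.pi Set.univ s
        = ⋂ j ∈ Finset.univ, U j ⁻¹' s j := by
      ext ω; simp [Set.mem_pi]
    rw [hpre, hindep.measure_inter_preimage_eq_mul Finset.univ (fun i _ => hs i)]
    exact Finset.prod_congr rfl fun j _ => by
      rw [← hunif j, Measure.map_apply (hmeas j) (hs j)]
  have hu0 : ∀ u ∈ Good, ∀ j, 0 < u j := fun u hu j => (hu j (Set.mem_univ j)).1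
  have hLpos : ∀ u ∈ Good, ∀ j, 0 < -Real.log (u j) := by
    intro u hu j
    have h := hu j (Set.mem_univ j)
    have := Real.log_neg h.1 h.2
    linarith
  have hkey : ∀ u ∈ Good, ∀ i : Fin n, (0 < x i ∧ 0 < y i) → ∀ j, j ≠ i →
      ((ENNReal.ofReal (-Real.log (u i)) / ENNReal.ofReal (x i)
          < ENNReal.ofReal (-Real.log (u j)) / ENNReal.ofReal (x j) ∧
        ENNReal.ofReal (-Real.log (u i)) / ENNReal.ofReal (y i)
          < ENNReal.ofReal (-Real.log (u j)) / ENNReal.ofReal (y j))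
        ↔ u j < (u i) ^ (mm i j)) := by
    intro u hu i hi j hj
    rw [rpow_lt_iff_aux (hu0 u hu i) (hu0 u hu j)]
    have hmm2 : mm i j * -Real.log (u i)
        = max (x j / x i * -Real.log (u i)) (y j / y i * -Real.log (u i)) := by
      rw [hmm]; exact max_mul_of_nonneg _ _ (hLpos u hu i).le
    rw [hmm2, max_lt_iff,
      ← ennreal_div_lt_iff (hLpos u hu i) (hLpos u hu j) hi.1 (hx j),
      ← ennreal_div_lt_iff (hLpos u hu i) (hLpos u hu j) hi.2 (hy j)]
  have hvalid_forced : ∀ u ∈ Good, ∀ i : Fin n,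
      ((∀ j, j ≠ i → ENNReal.ofReal (-Real.log (u i)) / ENNReal.ofReal (x i)
          < ENNReal.ofReal (-Real.log (u j)) / ENNReal.ofReal (x j)) ∧
       (∀ j, j ≠ i → ENNReal.ofReal (-Real.log (u i)) / ENNReal.ofReal (y i)
          < ENNReal.ofReal (-Real.log (u j)) / ENNReal.ofReal (y j)))
      → (0 < x i ∧ 0 < y i) := by
    intro u hu i h
    constructor
    · by_contra hxi
      have hxi0 : x i = 0 := le_antisymm (not_lt.mp hxi) (hx i)
      obtain ⟨k, hk⟩ := hxpos
      have hki : k ≠ i := fun h' => by rw [h', hxi0] at hk; exact lt_irrefl 0 hk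
      have hlt := h.1 k hki
      rw [hxi0, ENNReal.ofReal_zero,
        ENNReal.div_zero (ENNReal.ofReal_pos.mpr (hLpos u hu i)).ne'] at hlt
      exact not_top_lt (hlt.trans (ENNReal.div_lt_top ENNReal.ofReal_ne_top
        (ENNReal.ofReal_pos.mpr hk).ne'))
    · by_contra hyi
      have hyi0 : y i = 0 := le_antisymm (not_lt.mp hyi) (hy i)
      obtain ⟨k, hk⟩ := hypos
      have hki : k ≠ i := fun h' => by rw [h', hyi0] at hk; exact lt_irrefl 0 hk
      have hlt := h.2 k hki
      rw [hyi0, ENNReal.ofReal_zero,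
        ENNReal.div_zero (ENNReal.ofReal_pos.mpr (hLpos u hu i)).ne'] at hlt
      exact not_top_lt (hlt.trans (ENNReal.div_lt_top ENNReal.ofReal_ne_top
        (ENNReal.ofReal_pos.mpr hk).ne'))
  have hset : Atil ∩ Good = (⋃ i ∈ valid, B i) ∩ Good := by
    ext u
    simp only [Set.mem_inter_iff, Set.mem_iUnion, hAtil, hB, Set.mem_setOf_eq, hvalid,
      Finset.mem_filter, Finset.mem_univ, true_and, exists_prop]
    constructor
    · rintro ⟨⟨i, h1, h2⟩, hG⟩
      have hiv := hvalid_forced u hG i ⟨h1, h2⟩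
      exact ⟨⟨i, hiv, fun j hj => (hkey u hG i hiv j hj).mp ⟨h1 j hj, h2 j hj⟩⟩, hG⟩
    · rintro ⟨⟨i, hiv, hBi⟩, hG⟩
      exact ⟨⟨i, fun j hj => ((hkey u hG i hiv j hj).mpr (hBi j hj)).1,
        fun j hj => ((hkey u hG i hiv j hj).mpr (hBi j hj)).2⟩, hG⟩
  have hdisj : (valid : Set (Fin n)).PairwiseDisjoint fun i => B i ∩ Good := by
    intro a ha b hb hab
    refine Set.disjoint_left.mpr fun u hua hub => ?_
    have hG := hua.2
    have hxa : 0 < x a := ((Finset.mem_filter.mp (Finset.mem_coe.mp ha)).2).1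
    have hxb : 0 < x b := ((Finset.mem_filter.mp (Finset.mem_coe.mp hb)).2).1
    have h1 := (rpow_lt_iff_aux (hu0 u hG a) (hu0 u hG b)).mp (hua.1 b (Ne.symm hab))
    have h2 := (rpow_lt_iff_aux (hu0 u hG b) (hu0 u hG a)).mp (hub.1 a hab)
    have e1 : x b / x a * (-Real.log (u a)) ≤ mm a b * (-Real.log (u a)) :=
      mul_le_mul_of_nonneg_right (by rw [hmm]; exact le_max_left _ _) (hLpos u hG a).le
    have e2 : x a / x b * (-Real.log (u b)) ≤ mm b a * (-Real.log (u b)) :=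
      mul_le_mul_of_nonneg_right (by rw [hmm]; exact le_max_left _ _) (hLpos u hG b).le
    have f1 : x b / x a * (-Real.log (u a)) < -Real.log (u b) := e1.trans_lt h1
    have f2 : x a / x b * (-Real.log (u b)) < -Real.log (u a) := e2.trans_lt h2
    rw [div_mul_eq_mul_div, div_lt_iff₀ hxa] at f1
    rw [div_mul_eq_mul_div, div_lt_iff₀ hxb] at f2
    nlinarith [f1, f2]
  have hBmeas : ∀ i : Fin n, MeasurableSet (B i) := by
    intro i
    rw [hB]
    simp only [Set.setOf_forall]
    exact MeasurableSet.iInter fun j => MeasurableSet.iInter fun hj =>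
      measurableSet_lt (measurable_pi_apply j)
        ((Real.continuous_rpow_const (hmmnn i j)).measurable.comp (measurable_pi_apply i))
  have hBval : ∀ i ∈ valid, ν (B i) = ENNReal.ofReal (∑ j, mm i j)⁻¹ := by
    intro i hi
    obtain ⟨hxi, hyi⟩ := (Finset.mem_filter.mp hi).2
    have hmii : mm i i = 1 := by
      rw [hmm]; simp [div_self hxi.ne', div_self hyi.ne']
    have hs := pi_measure_slice i (mm i) (hmmnn i) hmii
    rw [hν, hB]
    exact hs
  have hchain : ν Atil = ∑ i ∈ valid, ENNReal.ofReal (∑ j, mm i j)⁻¹ := by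
    rw [← measure_inter_conull hGoodc, hset, Set.iUnion₂_inter,
      measure_biUnion_finset hdisj (fun i _ => (hBmeas i).inter hGoodmeas)]
    exact Finset.sum_congr rfl fun i hi => by
      rw [measure_inter_conull hGoodc, hBval i hi]
  have hgoal : {ω | ∃ i : Fin n,
        (∀ j, j ≠ i →
          ENNReal.ofReal (-Real.log (U i ω)) / ENNReal.ofReal (x i)
            < ENNReal.ofReal (-Real.log (U j ω)) / ENNReal.ofReal (x j)) ∧
        (∀ j, j ≠ i →
          ENNReal.ofReal (-Real.log (U i ω)) / ENNReal.ofReal (y i)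
            < ENNReal.ofReal (-Real.log (U j ω)) / ENNReal.ofReal (y j))}
      = (fun ω (j : Fin n) => U j ω) ⁻¹' Atil := rfl
  rw [hgoal, ← Measure.map_apply hfmeas hAmeas, hlaw, hchain,
    ENNReal.toReal_sum (fun i _ => ENNReal.ofReal_ne_top)]
  have hsummand : ∀ i ∈ valid, (ENNReal.ofReal (∑ j, mm i j)⁻¹).toReal
      = (∑ j, max (x j / x i) (y j / y i))⁻¹ := by
    intro i _
    rw [ENNReal.toReal_ofReal (inv_nonneg.mpr (Finset.sum_nonneg fun j _ => hmmnn i j)), hmm]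
  rw [Finset.sum_congr rfl hsummand]
  simp only [JP, hvalid]
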